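/- For any non-integer β ∈ (1,2), the set R_β(x) of all binary sequences ε ∈ {0,1}^ℕ with x = Σ ε_n β^{-n} has cardinality continuum for Lebesgue-almost every x ∈ (0, 1/(β-1)). -/

import Mathlib

open MeasureTheory

namespace Sidorov

/-- The greedy β-map on `[0, 1/(β-1)]`. -/
noncomputable def G (β y : ℝ) : ℝ := if y < 1/β then β*y else β*y - 1

noncomputable def MM (β : ℝ) : ℝ := 1/(β-1)
noncomputable def pp (β : ℝ) : ℝ := 1/β
noncomputable def qq (β : ℝ) : ℝ := 1/(β-1)/β

/-- Points of `[0, M)` whose `G`-orbit never enters the branching window `[p, q)`. -/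
noncomputable def Aset (β : ℝ) : Set ℝ :=
  {y | y ∈ Set.Ico (0:ℝ) (MM β) ∧ ∀ k : ℕ, (G β)^[k] y ∉ Set.Ico (pp β) (qq β)}

section Basic

variable {β : ℝ}

lemma hβ0 (hβ1 : 1 < β) : (0:ℝ) < β := lt_trans one_pos hβ1

lemma hM1 (hβ1 : 1 < β) (hβ2 : β < 2) : 1 < MM β := by
  rw [MM, lt_div_iff₀ (by linarith)]
  linarith

lemma hMpos (hβ1 : 1 < β) (hβ2 : β < 2) : 0 < MM β := lt_trans one_pos (hM1 hβ1 hβ2)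

lemma hppos (hβ1 : 1 < β) : 0 < pp β := by
  have := hβ0 hβ1; rw [pp]; positivity

lemma hp1 (hβ1 : 1 < β) : pp β < 1 := by
  rw [pp, div_lt_one (hβ0 hβ1)]; exact hβ1

lemma hβM (hβ1 : 1 < β) : β * MM β = MM β + 1 := by
  have h : β - 1 ≠ 0 := sub_ne_zero.mpr (ne_of_gt hβ1)
  rw [MM]; field_simp; ring

lemma hβq (hβ1 : 1 < β) : β * qq β = MM β := by
  have h : β - 1 ≠ 0 := sub_ne_zero.mpr (ne_of_gt hβ1)
  have h0 : β ≠ 0 := ne_of_gt (hβ0 hβ1)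
  rw [qq, MM]; field_simp

lemma hβp (hβ1 : 1 < β) : β * pp β = 1 := by
  have h0 : β ≠ 0 := ne_of_gt (hβ0 hβ1)
  rw [pp]; field_simp

lemma hpq (hβ1 : 1 < β) (hβ2 : β < 2) : pp β < qq β := by
  have h0 := hβ0 hβ1
  have h1 := hM1 hβ1 hβ2
  have h2 : β * pp β < β * qq β := by
    rw [hβp hβ1, hβq hβ1]; exact h1
  exact (mul_lt_mul_iff_right₀ h0).mp h2

lemma hqM (hβ1 : 1 < β) (hβ2 : β < 2) : qq β < MM β := by
  have h0 := hβ0 hβ1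
  have hM := hMpos hβ1 hβ2
  have h2 : β * qq β < β * MM β := by
    rw [hβq hβ1, hβM hβ1]; linarith
  exact (mul_lt_mul_iff_right₀ h0).mp h2

lemma hq1 (hβ1 : 1 < β) (hβ2 : β < 2) : 0 < qq β := lt_trans (hppos hβ1) (hpq hβ1 hβ2)

/-- `G` maps `[0, M)` into itself. -/
lemma G_mem (hβ1 : 1 < β) (hβ2 : β < 2) {y : ℝ} (hy : y ∈ Set.Ico (0:ℝ) (MM β)) :
    G β y ∈ Set.Ico (0:ℝ) (MM β) := by
  have h0 := hβ0 hβ1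
  rcases hy with ⟨hy0, hyM⟩
  rw [G]
  split_ifs with h
  · refine ⟨by positivity, ?_⟩
    calc β * y < β * pp β := mul_lt_mul_of_pos_left (by rwa [pp]) h0
      _ = 1 := hβp hβ1
      _ < MM β := hM1 hβ1 hβ2
  · push_neg at h
    constructor
    · have h1 : (1:ℝ) ≤ β * y := by
        calc (1:ℝ) = β * (1/β) := by field_simp
          _ ≤ β * y := mul_le_mul_of_nonneg_left h (le_of_lt h0)
      linarith
    · have : β * y < β * MM β := mul_lt_mul_of_pos_left hyM h0
      rw [hβM hβ1] at this
      linarith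

lemma G_iter_mem (hβ1 : 1 < β) (hβ2 : β < 2) {y : ℝ} (hy : y ∈ Set.Ico (0:ℝ) (MM β)) (n : ℕ) :
    (G β)^[n] y ∈ Set.Ico (0:ℝ) (MM β) := by
  induction n with
  | zero => simpa using hy
  | succ n ih =>
      rw [Function.iterate_succ_apply']
      exact G_mem hβ1 hβ2 ih

end Basic

/-! ### The survivor set has measure zero -/

section Null

variable {β : ℝ}

noncomputable def cseq (β y : ℝ) : ℕ → ℝ
  | 0 => 0
  | n+1 => β * cseq β y n + (if (G β)^[n] y < pp β then 0 else 1)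

noncomputable def xseq (β y : ℝ) : ℕ → ℝ
  | 0 => MM β
  | n+1 => if (G β)^[n] y < pp β then
      (if xseq β y n ≤ pp β then β * xseq β y n else 1)
    else β * xseq β y n - 1

lemma G_eval_lt {v : ℝ} (h : v < pp β) : G β v = β * v := by
  rw [G, pp] at *; rw [if_pos h]

lemma G_eval_ge {v : ℝ} (h : ¬ v < pp β) : G β v = β * v - 1 := by
  rw [G, pp] at *; rw [if_neg h]

/-- Orbit is affine in terms of `cseq`. -/
lemma iter_eq_affine (hβ1 : 1 < β) (y : ℝ) (n : ℕ) : (G β)^[n] y = β^n * y - cseq β y n := by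
  induction n with
  | zero => simp [cseq]
  | succ n ih =>
      rw [Function.iterate_succ_apply', ih, cseq]
      by_cases h : (G β)^[n] y < pp β
      · rw [if_pos h]
        rw [ih] at h
        rw [G_eval_lt h]
        ring
      · rw [if_neg h]
        rw [ih] at h
        rw [G_eval_ge h]
        ring

/-- Main interval bounds: `y_n < x_n ≤ M`. -/
lemma xseq_bounds (hβ1 : 1 < β) (hβ2 : β < 2) {y : ℝ} (hy : y ∈ Set.Ico (0:ℝ) (MM β)) (n : ℕ) :
    (G β)^[n] y < xseq β y n ∧ xseq β y n ≤ MM β := by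
  have h0 : (0:ℝ) < β := hβ0 hβ1
  induction n with
  | zero => exact ⟨hy.2, le_refl _⟩
  | succ n ih =>
      obtain ⟨ih1, ih2⟩ := ih
      have hyn := G_iter_mem hβ1 hβ2 hy n
      rw [Function.iterate_succ_apply']
      rw [xseq]
      by_cases h : (G β)^[n] y < pp β
      · rw [if_pos h, G_eval_lt h]
        by_cases h2 : xseq β y n ≤ pp β
        · rw [if_pos h2]
          constructor
          · exact mul_lt_mul_of_pos_left ih1 h0
          · calc β * xseq β y n ≤ β * pp β := mul_le_mul_of_nonneg_left h2 (le_of_lt h0)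
              _ = 1 := hβp hβ1
              _ ≤ MM β := le_of_lt (hM1 hβ1 hβ2)
        · rw [if_neg h2]
          constructor
          · calc β * (G β)^[n] y < β * pp β := mul_lt_mul_of_pos_left h h0
              _ = 1 := hβp hβ1
          · exact le_of_lt (hM1 hβ1 hβ2)
      · rw [if_neg h, G_eval_ge h]
        constructor
        · have := mul_lt_mul_of_pos_left ih1 h0
          linarith
        · have := mul_le_mul_of_nonneg_left ih2 (le_of_lt h0)
          rw [hβM hβ1] at this
          linarith

/-- If no "absorption" happens in `[N, N+k)`, the difference `x - y` is scaled by `β^k`. -/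
lemma diff_growth (hβ1 : 1 < β) {y : ℝ} (N : ℕ) (k : ℕ)
    (h : ∀ j, N ≤ j → j < N + k → ¬ ((G β)^[j] y < pp β ∧ pp β < xseq β y j)) :
    xseq β y (N+k) - (G β)^[N+k] y = β^k * (xseq β y N - (G β)^[N] y) := by
  induction k with
  | zero => simp
  | succ k ih =>
      have ih' := ih (fun j hj1 hj2 => h j hj1 (by omega))
      have hnoabs := h (N+k) (by omega) (by omega)
      rw [show N + (k+1) = (N+k) + 1 by ring]
      rw [Function.iterate_succ_apply', xseq]
      by_cases hc : (G β)^[N+k] y < pp β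
      · rw [if_pos hc, G_eval_lt hc]
        have hx : xseq β y (N+k) ≤ pp β := by
          by_contra hcon
          exact hnoabs ⟨hc, lt_of_not_ge hcon⟩
        rw [if_pos hx]
        rw [pow_succ]
        rw [show β^k * β * (xseq β y N - (G β)^[N] y)
            = β * (β^k * (xseq β y N - (G β)^[N] y)) by ring, ← ih']
        ring
      · rw [if_neg hc, G_eval_ge hc]
        rw [pow_succ]
        rw [show β^k * β * (xseq β y N - (G β)^[N] y)
            = β * (β^k * (xseq β y N - (G β)^[N] y)) by ring, ← ih']
        ring

/-- Absorption happens beyond any time. -/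
lemma abs_exists (hβ1 : 1 < β) (hβ2 : β < 2) {y : ℝ} (hy : y ∈ Set.Ico (0:ℝ) (MM β)) (N : ℕ) :
    ∃ n, N ≤ n ∧ ((G β)^[n] y < pp β ∧ pp β < xseq β y n) := by
  by_contra hcon
  push_neg at hcon
  have hd : 0 < xseq β y N - (G β)^[N] y := by
    have := xseq_bounds hβ1 hβ2 hy N
    linarith [this.1]
  obtain ⟨k, hk⟩ := pow_unbounded_of_one_lt ((MM β) / (xseq β y N - (G β)^[N] y)) hβ1
  have hgrow := diff_growth (β := β) hβ1 (y := y) N k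
    (fun j hj1 _ => by
      intro hc
      exact (not_lt.mpr (hcon j hj1 hc.1)) hc.2)
  have hb := xseq_bounds hβ1 hβ2 hy (N+k)
  have hyk := G_iter_mem hβ1 hβ2 hy (N+k)
  have h1 : xseq β y (N+k) - (G β)^[N+k] y ≤ MM β := by
    have := hyk.1
    linarith [hb.2]
  rw [hgrow] at h1
  rw [div_lt_iff₀ hd] at hk
  linarith

/-- Itinerary lemma: points in the cylinder follow the same orbit formula. -/
lemma itinerary (hβ1 : 1 < β) (hβ2 : β < 2) {y : ℝ} (n : ℕ) (z : ℝ)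
    (hz : β^n * z - cseq β y n ∈ Set.Ico (0:ℝ) (xseq β y n)) :
    (G β)^[n] z = β^n * z - cseq β y n := by
  have h0 : (0:ℝ) < β := hβ0 hβ1
  induction n generalizing z with
  | zero => simp [cseq]
  | succ n ih =>
      set w := β^n * z - cseq β y n with hw
      obtain ⟨hz0, hz1⟩ := hz
      by_cases h : (G β)^[n] y < pp β
      · have hstep : β^(n+1) * z - cseq β y (n+1) = β * w := by
          rw [cseq, if_pos h, hw]; ring
        rw [hstep] at hz0 hz1 ⊢
        have hw0 : 0 ≤ w := nonneg_of_mul_nonneg_right hz0 h0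
        have hxs : xseq β y (n+1) = if xseq β y n ≤ pp β then β * xseq β y n else 1 := by
          rw [xseq, if_pos h]
        have hwp : w < pp β ∧ w < xseq β y n := by
          rw [hxs] at hz1
          by_cases h2 : xseq β y n ≤ pp β
          · rw [if_pos h2] at hz1
            have hwx : w < xseq β y n := (mul_lt_mul_iff_right₀ h0).mp hz1
            exact ⟨lt_of_lt_of_le hwx h2, hwx⟩
          · rw [if_neg h2] at hz1
            push_neg at h2
            have hwp : w < pp β := by
              have : β * w < β * pp β := by rw [hβp hβ1]; linarith
              exact (mul_lt_mul_iff_right₀ h0).mp this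
            exact ⟨hwp, lt_trans hwp h2⟩
        have hIH := ih z ⟨hw0, hwp.2⟩
        rw [Function.iterate_succ_apply', hIH, ← hw, G_eval_lt hwp.1]
      · have hstep : β^(n+1) * z - cseq β y (n+1) = β * w - 1 := by
          rw [cseq, if_neg h, hw]; ring
        rw [hstep] at hz0 hz1 ⊢
        have hxs : xseq β y (n+1) = β * xseq β y n - 1 := by
          rw [xseq, if_neg h]
        rw [hxs] at hz1
        have hwp : pp β ≤ w := by
          have h1 : β * pp β ≤ β * w := by rw [hβp hβ1]; linarith
          exact le_of_mul_le_mul_left h1 h0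
        have hwx : w < xseq β y n := by
          have : β * w < β * xseq β y n := by linarith
          exact (mul_lt_mul_iff_right₀ h0).mp this
        have hIH := ih z ⟨le_trans (le_of_lt (hppos hβ1)) hwp, hwx⟩
        rw [Function.iterate_succ_apply', hIH, ← hw, G_eval_ge (not_lt.mpr hwp)]

lemma measurable_G : Measurable (G β) := by
  unfold G
  exact Measurable.ite (measurableSet_lt measurable_id measurable_const)
    (measurable_id.const_mul β) ((measurable_id.const_mul β).sub measurable_const)

lemma measurable_Aset : MeasurableSet (Aset β) := by
  have : Aset β = Set.Ico 0 (MM β) ∩ ⋂ k : ℕ,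
      (fun y => (G β)^[k] y) ⁻¹' (Set.Ico (pp β) (qq β))ᶜ := by
    ext y
    simp only [Aset, Set.mem_setOf_eq, Set.mem_inter_iff, Set.mem_iInter, Set.mem_preimage,
      Set.mem_compl_iff]
  rw [this]
  exact measurableSet_Ico.inter (MeasurableSet.iInter fun k =>
    (measurable_G.iterate k) measurableSet_Ico.compl)

lemma ball_estimate (hβ1 : 1 < β) (hβ2 : β < 2) {y : ℝ} (hy : y ∈ Aset β) (N : ℕ) :
    ∃ k : ℕ, N ≤ k ∧
      volume (Aset β ∩ Metric.closedBall y ((1/β)^k))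
        + ENNReal.ofReal ((min (qq β) 1 - pp β) * (1/β)^k)
      ≤ ENNReal.ofReal (2 * (1/β)^k) := by
  have h0 : (0:ℝ) < β := hβ0 hβ1
  obtain ⟨n, hn, habs⟩ := abs_exists hβ1 hβ2 hy.1 N
  refine ⟨n+1, le_trans hn (Nat.le_succ n), ?_⟩
  set k := n + 1 with hk
  set r : ℝ := (1/β)^k with hr
  have hrpos : 0 < r := by positivity
  have hβk : (0:ℝ) < β^k := pow_pos h0 k
  have hβkr : β^k * r = 1 := by
    rw [hr, one_div, inv_pow, mul_inv_cancel₀ (by positivity)]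
  set c := cseq β y k with hc
  have hx1 : xseq β y k = 1 := by
    rw [hk, xseq, if_pos habs.1, if_neg (not_le.mpr habs.2)]
  -- translate membership in scaled intervals
  have hval : ∀ z : ℝ, z = (β^k * z) * r := by
    intro z
    rw [show (β^k * z) * r = z * (β^k * r) by ring, hβkr, mul_one]
  -- the gap interval
  set K := Set.Ico ((c + pp β) * r) ((c + min (qq β) 1) * r) with hK
  have hKw : ∀ z ∈ K, pp β ≤ β^k * z - c ∧ β^k * z - c < min (qq β) 1 := by
    intro z hz
    constructor
    · have h1 : c + pp β ≤ β^k * z := by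
        have h2 : (c + pp β) * r ≤ (β^k * z) * r := by rw [← hval z]; exact hz.1
        exact (mul_le_mul_iff_left₀ hrpos).mp h2
      linarith
    · have h1 : β^k * z < c + min (qq β) 1 := by
        have h2 : (β^k * z) * r < (c + min (qq β) 1) * r := by rw [← hval z]; exact hz.2
        exact (mul_lt_mul_iff_left₀ hrpos).mp h2
      linarith
  have hKA : ∀ z ∈ K, z ∉ Aset β := by
    intro z hz hzA
    obtain ⟨hw1, hw2⟩ := hKw z hz
    have hiti := itinerary hβ1 hβ2 (y := y) k z
      ⟨le_trans (le_of_lt (hppos hβ1)) hw1, by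
        rw [hx1]; exact lt_of_lt_of_le hw2 (min_le_right _ _)⟩
    exact (hzA.2 k) (by
      rw [hiti]
      exact ⟨hw1, lt_of_lt_of_le hw2 (min_le_left _ _)⟩)
  have hyw : (0:ℝ) ≤ β^k * y - c ∧ β^k * y - c < 1 := by
    have h1 : (G β)^[k] y = β^k * y - c := iter_eq_affine hβ1 y k
    constructor
    · have := (G_iter_mem hβ1 hβ2 hy.1 k).1; rwa [h1] at this
    · have := (xseq_bounds hβ1 hβ2 hy.1 k).1; rwa [h1, hx1] at this
  -- K is inside the closed ball around y of radius r
  have hKball : K ⊆ Metric.closedBall y r := by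
    intro z hz
    obtain ⟨hw1, hw2⟩ := hKw z hz
    have hz1 : c * r ≤ z := by
      rw [hval z]
      apply mul_le_mul_of_nonneg_right _ (le_of_lt hrpos)
      have := hppos (β := β) hβ1
      linarith
    have hz2 : z < (c + 1) * r := by
      rw [hval z]
      apply mul_lt_mul_of_pos_right _ hrpos
      have : min (qq β) 1 ≤ 1 := min_le_right _ _
      linarith
    have hy1 : c * r ≤ y := by
      rw [hval y]
      apply mul_le_mul_of_nonneg_right _ (le_of_lt hrpos)
      linarith [hyw.1]
    have hy2 : y < (c + 1) * r := by
      rw [hval y]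
      apply mul_lt_mul_of_pos_right _ hrpos
      linarith [hyw.2]
    rw [Metric.mem_closedBall, Real.dist_eq, abs_le]
    constructor <;> nlinarith
  -- measure bookkeeping
  have hdisj : Disjoint (Aset β ∩ Metric.closedBall y r) K := by
    rw [Set.disjoint_right]
    intro z hzK hzA
    exact hKA z hzK hzA.1
  have hunion : (Aset β ∩ Metric.closedBall y r) ∪ K ⊆ Metric.closedBall y r :=
    Set.union_subset Set.inter_subset_right hKball
  have hKvol : volume K = ENNReal.ofReal ((min (qq β) 1 - pp β) * r) := by
    rw [hK, Real.volume_Ico]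
    congr 1
    ring
  calc volume (Aset β ∩ Metric.closedBall y r) + ENNReal.ofReal ((min (qq β) 1 - pp β) * r)
      = volume (Aset β ∩ Metric.closedBall y r) + volume K := by rw [hKvol]
    _ = volume ((Aset β ∩ Metric.closedBall y r) ∪ K) :=
        (measure_union hdisj measurableSet_Ico).symm
    _ ≤ volume (Metric.closedBall y r) := measure_mono hunion
    _ = ENNReal.ofReal (2 * r) := by rw [Real.volume_closedBall]

theorem volume_Aset (hβ1 : 1 < β) (hβ2 : β < 2) : volume (Aset β) = 0 := by
  set δ : ℝ := min (qq β) 1 - pp β with hδ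
  have hδpos : 0 < δ := by
    rw [hδ, sub_pos, lt_min_iff]
    exact ⟨hpq hβ1 hβ2, hp1 hβ1⟩
  have hδ1 : δ < 2 := by
    have : min (qq β) 1 ≤ 1 := min_le_right _ _
    have := hppos (β := β) hβ1
    rw [hδ]; linarith
  have hdens := Besicovitch.ae_tendsto_measure_inter_div_of_measurableSet volume
    (measurable_Aset (β := β))
  have key : ∀ y ∈ Aset β, ¬ Filter.Tendsto
      (fun rr => volume (Aset β ∩ Metric.closedBall y rr) / volume (Metric.closedBall y rr))
      (nhdsWithin 0 (Set.Ioi 0)) (nhds 1) := by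
    intro y hy hT
    have hconst : ENNReal.ofReal ((2 - δ)/2) < 1 := by
      rw [ENNReal.ofReal_lt_one]
      linarith
    have hev := hT.eventually (lt_mem_nhds hconst)
    rw [eventually_nhdsWithin_iff, Metric.eventually_nhds_iff] at hev
    obtain ⟨ε, hεpos, hε⟩ := hev
    have hβinv : (0:ℝ) ≤ 1/β ∧ 1/β < 1 := by
      constructor
      · positivity
      · rw [div_lt_one (hβ0 hβ1)]; exact hβ1
    obtain ⟨N, hN⟩ := exists_pow_lt_of_lt_one hεpos hβinv.2
    obtain ⟨k, hkN, hest⟩ := ball_estimate hβ1 hβ2 hy N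
    set r : ℝ := (1/β)^k with hrdef
    have hrpos : 0 < r := by positivity
    have hrε : r < ε := by
      calc r ≤ (1/β)^N := pow_le_pow_of_le_one hβinv.1 (le_of_lt hβinv.2) hkN
        _ < ε := hN
    have hP := hε (by rw [Real.dist_eq, sub_zero, abs_of_pos hrpos]; exact hrε)
      (Set.mem_Ioi.mpr hrpos)
    -- upper bound on ratio
    have hle : volume (Aset β ∩ Metric.closedBall y r)
        ≤ ENNReal.ofReal ((2 - δ)/2) * ENNReal.ofReal (2 * r) := by
      rw [← ENNReal.ofReal_mul (by linarith)]
      have heq : (2 - δ)/2 * (2 * r) = 2*r - δ*r := by ring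
      rw [heq]
      have h2 : ENNReal.ofReal (2*r - δ*r) + ENNReal.ofReal (δ*r) = ENNReal.ofReal (2*r) := by
        rw [← ENNReal.ofReal_add (by nlinarith) (by positivity)]
        congr 1; ring
      have h3 := hest
      rw [← h2] at h3
      exact (ENNReal.add_le_add_iff_right (by simp)).mp h3
    have hratio : volume (Aset β ∩ Metric.closedBall y r) / volume (Metric.closedBall y r)
        ≤ ENNReal.ofReal ((2 - δ)/2) := by
      rw [Real.volume_closedBall]
      exact ENNReal.div_le_of_le_mul hle
    exact absurd (lt_of_lt_of_le hP hratio) (lt_irrefl _)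
  have hae : ∀ᵐ y ∂(volume : Measure ℝ), y ∉ Aset β := by
    filter_upwards [hdens] with y hT
    intro hmem
    apply key y hmem
    have hind : (Aset β).indicator (1 : ℝ → ENNReal) y = 1 := by
      rw [Set.indicator_of_mem hmem]; rfl
    rwa [hind] at hT
  exact measure_eq_zero_iff_ae_notMem.mpr hae

end Null


/-! ### The branching construction -/

section Construction

variable {β : ℝ}

/-- State: current remainder value and how many free choices have been consumed. -/
noncomputable def sw (β x : ℝ) (a : ℕ → Bool) : ℕ → ℝ × ℕ
  | 0 => (x, 0)
  | n+1 =>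
    if pp β ≤ (sw β x a n).1 ∧ (sw β x a n).1 < qq β then
      (β * (sw β x a n).1 - (if a (sw β x a n).2 then 1 else 0), (sw β x a n).2 + 1)
    else (G β (sw β x a n).1, (sw β x a n).2)

def branchAt (β x : ℝ) (a : ℕ → Bool) (n : ℕ) : Prop :=
  pp β ≤ (sw β x a n).1 ∧ (sw β x a n).1 < qq β

noncomputable def digB (β x : ℝ) (a : ℕ → Bool) (n : ℕ) : Bool :=
  if pp β ≤ (sw β x a n).1 ∧ (sw β x a n).1 < qq β then a (sw β x a n).2
  else (if (sw β x a n).1 < pp β then false else true)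

noncomputable def dig (β x : ℝ) (a : ℕ → Bool) (n : ℕ) : ℕ :=
  if digB β x a n then 1 else 0

lemma dig_le_one (β x : ℝ) (a : ℕ → Bool) (n : ℕ) : dig β x a n ≤ 1 := by
  rw [dig]; split_ifs <;> simp

lemma dig_cast (β x : ℝ) (a : ℕ → Bool) (n : ℕ) :
    ((dig β x a n : ℕ) : ℝ) = if digB β x a n then (1:ℝ) else 0 := by
  rw [dig]; split_ifs <;> simp

lemma sw_fst_step (β x : ℝ) (a : ℕ → Bool) (n : ℕ) :
    (sw β x a (n+1)).1 = β * (sw β x a n).1 - (dig β x a n : ℝ) := by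
  rw [dig_cast, digB, sw]
  by_cases h : pp β ≤ (sw β x a n).1 ∧ (sw β x a n).1 < qq β
  · simp only [if_pos h]
  · simp only [if_neg h]
    by_cases h2 : (sw β x a n).1 < pp β
    · simp only [if_pos h2, G_eval_lt h2]; norm_num
    · simp only [if_neg h2, G_eval_ge h2]; norm_num

lemma sw_snd_step_branch (β x : ℝ) (a : ℕ → Bool) (n : ℕ) (h : branchAt β x a n) :
    (sw β x a (n+1)).2 = (sw β x a n).2 + 1 := by
  unfold branchAt at h
  rw [sw, if_pos h]

lemma sw_snd_step_nobranch (β x : ℝ) (a : ℕ → Bool) (n : ℕ) (h : ¬ branchAt β x a n) :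
    (sw β x a (n+1)).2 = (sw β x a n).2 ∧ (sw β x a (n+1)).1 = G β (sw β x a n).1 := by
  unfold branchAt at h
  rw [sw, if_neg h]
  exact ⟨rfl, rfl⟩

lemma sw_snd_mono (β x : ℝ) (a : ℕ → Bool) (n : ℕ) :
    (sw β x a n).2 ≤ (sw β x a (n+1)).2 ∧ (sw β x a (n+1)).2 ≤ (sw β x a n).2 + 1 := by
  by_cases h : branchAt β x a n
  · rw [sw_snd_step_branch β x a n h]; omega
  · rw [(sw_snd_step_nobranch β x a n h).1]; omega

/-- The state value stays in `[0, M)`. -/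
lemma sw_mem (hβ1 : 1 < β) (hβ2 : β < 2) {x : ℝ} (hx : x ∈ Set.Ico (0:ℝ) (MM β))
    (a : ℕ → Bool) (n : ℕ) : (sw β x a n).1 ∈ Set.Ico (0:ℝ) (MM β) := by
  have h0 : (0:ℝ) < β := hβ0 hβ1
  induction n with
  | zero => exact hx
  | succ n ih =>
      by_cases h : branchAt β x a n
      · obtain ⟨h1, h2⟩ := h
        rw [sw_fst_step]
        rcases Nat.le_one_iff_eq_zero_or_eq_one.mp (dig_le_one β x a n) with hd | hd <;>
          rw [hd]
        · push_cast
          constructor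
          · have : β * pp β ≤ β * (sw β x a n).1 := mul_le_mul_of_nonneg_left h1 (le_of_lt h0)
            rw [hβp hβ1] at this
            linarith
          · have : β * (sw β x a n).1 < β * qq β := mul_lt_mul_of_pos_left h2 h0
            rw [hβq hβ1] at this
            linarith
        · push_cast
          constructor
          · have : β * pp β ≤ β * (sw β x a n).1 := mul_le_mul_of_nonneg_left h1 (le_of_lt h0)
            rw [hβp hβ1] at this
            linarith
          · have : β * (sw β x a n).1 < β * qq β := mul_lt_mul_of_pos_left h2 h0
            rw [hβq hβ1] at this
            have hM := hM1 hβ1 hβ2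
            linarith
      · rw [(sw_snd_step_nobranch β x a n h).2]
        exact G_mem hβ1 hβ2 ih

/-- Value of a finite word. -/
noncomputable def lval (β x : ℝ) (w : List Bool) : ℝ :=
  w.foldl (fun v b => β * v - (if b then 1 else 0)) x

noncomputable def NullBad (β : ℝ) : Set ℝ := ⋃ w : List Bool, {x | lval β x w ∈ Aset β}

noncomputable def wseq (β x : ℝ) (a : ℕ → Bool) (n : ℕ) : List Bool :=
  (List.range n).map (digB β x a)

lemma lval_wseq (β x : ℝ) (a : ℕ → Bool) (n : ℕ) :
    lval β x (wseq β x a n) = (sw β x a n).1 := by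
  induction n with
  | zero => rfl
  | succ n ih =>
      rw [wseq, List.range_succ, List.map_append, List.map_singleton]
      rw [lval, List.foldl_append, List.foldl_cons, List.foldl_nil]
      rw [sw_fst_step, dig_cast]
      rw [show List.foldl (fun v b => β * v - (if b then 1 else 0)) x ((List.range n).map
        (digB β x a)) = lval β x (wseq β x a n) from rfl, ih]

lemma lval_affine (β : ℝ) (w : List Bool) : ∀ x : ℝ,
    lval β x w = β^(w.length) * x + lval β 0 w := by
  induction w with
  | nil => intro x; simp [lval]
  | cons b w ih =>
      intro x
      have h1 : lval β x (b :: w) = lval β (β * x - (if b then 1 else 0)) w := rfl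
      have h2 : lval β 0 (b :: w) = lval β (β * 0 - (if b then 1 else 0)) w := rfl
      rw [h1, h2, ih (β * x - (if b then 1 else 0)), ih (β * 0 - (if b then 1 else 0))]
      simp only [List.length_cons]
      ring

lemma volume_NullBad (hβ1 : 1 < β) (hβ2 : β < 2) : volume (NullBad β) = 0 := by
  rw [NullBad]
  refine measure_iUnion_null fun w => ?_
  have h0 : (0:ℝ) < β := hβ0 hβ1
  have hpow : (β:ℝ)^(w.length) ≠ 0 := by positivity
  have hset : {x : ℝ | lval β x w ∈ Aset β}
      = (fun x : ℝ => β^(w.length) * x) ⁻¹' ((fun u : ℝ => u + lval β 0 w) ⁻¹' Aset β) := by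
    ext x
    simp [Set.mem_preimage, lval_affine β w x]
  rw [hset]
  rw [Real.volume_preimage_mul_left hpow]
  have : volume ((fun u : ℝ => u + lval β 0 w) ⁻¹' Aset β) = volume (Aset β) :=
    measure_preimage_add_right volume (lval β 0 w) (Aset β)
  rw [this, volume_Aset hβ1 hβ2, mul_zero]

/-- Branch points occur beyond any time. -/
lemma branch_exists (hβ1 : 1 < β) (hβ2 : β < 2) {x : ℝ} (hx : x ∈ Set.Ico (0:ℝ) (MM β))
    (hnb : ∀ w, lval β x w ∉ Aset β) (a : ℕ → Bool) (n : ℕ) :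
    ∃ k, n ≤ k ∧ branchAt β x a k := by
  have hv : (sw β x a n).1 ∈ Set.Ico (0:ℝ) (MM β) := sw_mem hβ1 hβ2 hx a n
  have hnA : (sw β x a n).1 ∉ Aset β := by
    rw [← lval_wseq β x a n]; exact hnb _
  have hj : ∃ j, (G β)^[j] (sw β x a n).1 ∈ Set.Ico (pp β) (qq β) := by
    by_contra hcon
    push_neg at hcon
    exact hnA ⟨hv, fun k hk => (hcon k) hk⟩
  obtain ⟨j, hj⟩ := hj
  clear hv hnA
  induction j generalizing n with
  | zero =>
      simp only [Function.iterate_zero, id_eq] at hj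
      exact ⟨n, le_refl n, hj⟩
  | succ j ih =>
      by_cases hbr : branchAt β x a n
      · exact ⟨n, le_refl n, hbr⟩
      · have hstep := (sw_snd_step_nobranch β x a n hbr).2
        have : (G β)^[j] (sw β x a (n+1)).1 ∈ Set.Ico (pp β) (qq β) := by
          rw [hstep, ← Function.iterate_succ_apply]
          exact hj
        obtain ⟨k, hk1, hk2⟩ := ih (n+1) this
        exact ⟨k, le_trans (Nat.le_succ n) hk1, hk2⟩

lemma sw_snd_const (β x : ℝ) (a : ℕ → Bool) (m : ℕ) :
    ∀ n, m ≤ n → (∀ j, m ≤ j → j < n → ¬ branchAt β x a j) →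
    (sw β x a n).2 = (sw β x a m).2 := by
  intro n
  induction n with
  | zero =>
      intro h _
      have hm : m = 0 := by omega
      rw [hm]
  | succ n ih =>
      intro hmn hnb
      rcases Nat.lt_or_ge m (n+1) with h | h
      · have hmn' : m ≤ n := by omega
        rw [(sw_snd_step_nobranch β x a n (hnb n hmn' (by omega))).1]
        exact ih hmn' (fun j hj1 hj2 => hnb j hj1 (by omega))
      · have hm : m = n+1 := by omega
        rw [hm]
  
/-- The `n`-th branch point exists. -/
lemma nth_branch (hβ1 : 1 < β) (hβ2 : β < 2) {x : ℝ} (hx : x ∈ Set.Ico (0:ℝ) (MM β))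
    (hnb : ∀ w, lval β x w ∉ Aset β) (a : ℕ → Bool) (n : ℕ) :
    ∃ k, (sw β x a k).2 = n ∧ branchAt β x a k := by
  classical
  induction n with
  | zero =>
      obtain ⟨k, _, hk⟩ := branch_exists hβ1 hβ2 hx hnb a 0
      have hex : ∃ j, branchAt β x a j := ⟨k, hk⟩
      refine ⟨Nat.find hex, ?_, Nat.find_spec hex⟩
      have := sw_snd_const β x a 0 (Nat.find hex) (Nat.zero_le _)
        (fun j _ hj2 => Nat.find_min hex hj2)
      simpa [sw] using this
  | succ n ih =>
      obtain ⟨k, hmk, hbrk⟩ := ih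
      obtain ⟨k', hk'1, hk'2⟩ := branch_exists hβ1 hβ2 hx hnb a (k+1)
      have hex : ∃ j, branchAt β x a (k+1+j) := ⟨k' - (k+1), by
        rw [show k+1+(k'-(k+1)) = k' by omega]; exact hk'2⟩
      refine ⟨k+1+Nat.find hex, ?_, Nat.find_spec hex⟩
      have hconst := sw_snd_const β x a (k+1) (k+1+Nat.find hex) (by omega)
        (fun j hj1 hj2 => by
          have := Nat.find_min hex (m := j - (k+1)) (by omega)
          rwa [show k+1+(j-(k+1)) = j by omega] at this)
      rw [hconst, sw_snd_step_branch β x a k hbrk, hmk]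

/-- Agreement of states when the inputs agree on consumed choices. -/
lemma sw_agree (β x : ℝ) (a a' : ℕ → Bool) (n : ℕ)
    (hag : ∀ i, i < n → a i = a' i) :
    ∀ k, (sw β x a k).2 ≤ n → sw β x a k = sw β x a' k := by
  intro k
  induction k with
  | zero => intro _; rfl
  | succ k ih =>
      intro hle
      have hk : (sw β x a k).2 ≤ n := le_trans (sw_snd_mono β x a k).1 hle
      have heq := ih hk
      by_cases hb : pp β ≤ (sw β x a k).1 ∧ (sw β x a k).1 < qq β
      · have hlt : (sw β x a k).2 < n := by
          have := sw_snd_step_branch β x a k hb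
          omega
        have hb' : pp β ≤ (sw β x a' k).1 ∧ (sw β x a' k).1 < qq β := by rw [← heq]; exact hb
        rw [sw, sw, if_pos hb, if_pos hb', ← heq, hag _ hlt]
      · have hb' : ¬ (pp β ≤ (sw β x a' k).1 ∧ (sw β x a' k).1 < qq β) := by
          rw [← heq]; exact hb
        rw [sw, sw, if_neg hb, if_neg hb', heq]

/-- Partial sums. -/
lemma psum (hβ1 : 1 < β) (x : ℝ) (a : ℕ → Bool) (n : ℕ) :
    x = (∑ k ∈ Finset.range n, (dig β x a k : ℝ)/β^(k+1)) + (sw β x a n).1/β^n := by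
  have h0 : (0:ℝ) < β := hβ0 hβ1
  induction n with
  | zero => simp [sw]
  | succ n ih =>
      rw [Finset.sum_range_succ]
      have hstep := sw_fst_step β x a n
      have hβn : (β:ℝ)^n ≠ 0 := by positivity
      have hβn1 : (β:ℝ)^(n+1) ≠ 0 := by positivity
      have : (dig β x a n : ℝ)/β^(n+1) + (sw β x a (n+1)).1/β^(n+1) = (sw β x a n).1/β^n := by
        rw [hstep]
        field_simp
        ring
      linarith [this, ih]


/-- Every choice sequence produces a genuine representation. -/
lemma rep_tsum (hβ1 : 1 < β) (hβ2 : β < 2) {x : ℝ} (hx : x ∈ Set.Ico (0:ℝ) (MM β))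
    (a : ℕ → Bool) : x = ∑' n : ℕ, ((dig β x a n : ℕ) : ℝ) / β ^ (n + 1) := by
  have h0 : (0:ℝ) < β := hβ0 hβ1
  have hinv0 : (0:ℝ) ≤ 1/β := by positivity
  have hinv1 : 1/β < 1 := by rw [div_lt_one h0]; exact hβ1
  have hle : ∀ n : ℕ, ((dig β x a n : ℕ) : ℝ) / β ^ (n + 1) ≤ (1/β)^n := by
    intro n
    have hd : ((dig β x a n : ℕ) : ℝ) ≤ 1 := by exact_mod_cast dig_le_one β x a n
    calc ((dig β x a n : ℕ) : ℝ) / β ^ (n + 1) ≤ 1 / β ^ (n+1) := by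
          gcongr
      _ = (1/β)^(n+1) := by rw [one_div_pow]
      _ ≤ (1/β)^n := pow_le_pow_of_le_one hinv0 (le_of_lt hinv1) (Nat.le_succ n)
  have hsummable : Summable (fun n : ℕ => ((dig β x a n : ℕ) : ℝ) / β ^ (n + 1)) :=
    Summable.of_nonneg_of_le (fun n => by positivity) hle
      (summable_geometric_of_lt_one hinv0 hinv1)
  have hps : ∀ n, ∑ k ∈ Finset.range n, ((dig β x a k : ℕ) : ℝ)/β^(k+1)
      = x - (sw β x a n).1/β^n := fun n => by linarith [psum hβ1 x a n]
  have hzero : Filter.Tendsto (fun n : ℕ => (sw β x a n).1/β^n) Filter.atTop (nhds 0) := by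
    have hnonneg : ∀ n : ℕ, 0 ≤ (sw β x a n).1/β^n := fun n => by
      have h1 := (sw_mem hβ1 hβ2 hx a n).1
      positivity
    have hub : ∀ n : ℕ, (sw β x a n).1/β^n ≤ MM β * (1/β)^n := fun n => by
      have hv := (sw_mem hβ1 hβ2 hx a n).2
      calc (sw β x a n).1/β^n ≤ MM β / β^n := by gcongr
        _ = MM β * (1/β)^n := by rw [one_div_pow]; ring
    have hg : Filter.Tendsto (fun n : ℕ => MM β * (1/β)^n) Filter.atTop (nhds 0) := by
      have h3 := (tendsto_pow_atTop_nhds_zero_of_lt_one hinv0 hinv1).const_mul (MM β)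
      simpa only [mul_zero] using h3
    exact squeeze_zero hnonneg hub hg
  have hlim : Filter.Tendsto (fun n : ℕ => x - (sw β x a n).1/β^n) Filter.atTop (nhds x) := by
    have := Filter.Tendsto.const_sub x hzero
    simpa using this
  have hhs : HasSum (fun n : ℕ => ((dig β x a n : ℕ) : ℝ) / β ^ (n + 1)) x := by
    rw [Summable.hasSum_iff_tendsto_nat hsummable]
    exact hlim.congr (fun n => (hps n).symm)
  exact hhs.tsum_eq.symm

/-- Distinct choice sequences give distinct digit expansions. -/
lemma inj_dig (hβ1 : 1 < β) (hβ2 : β < 2) {x : ℝ} (hx : x ∈ Set.Ico (0:ℝ) (MM β))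
    (hnb : ∀ w, lval β x w ∉ Aset β) {a a' : ℕ → Bool}
    (hfe : (fun n => dig β x a n) = (fun n => dig β x a' n)) : a = a' := by
  classical
  by_contra hne
  have hex : ∃ i, a i ≠ a' i := Function.ne_iff.mp hne
  set n := Nat.find hex with hn
  have hag : ∀ i, i < n → a i = a' i := fun i hi => by
    have := Nat.find_min hex hi
    simpa using this
  obtain ⟨k, hmk, hbrk⟩ := nth_branch hβ1 hβ2 hx hnb a n
  have heq := sw_agree β x a a' n hag k (le_of_eq hmk)
  have hd : dig β x a k ≠ dig β x a' k := by
    unfold branchAt at hbrk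
    rw [dig, dig, digB, digB, ← heq, if_pos hbrk, if_pos hbrk, hmk]
    have hne' : a n ≠ a' n := Nat.find_spec hex
    cases ha : a n <;> cases ha' : a' n <;> simp_all
  exact hd (congrFun hfe k)

end Construction

end Sidorov

open MeasureTheory

/-- for any (automatically non-integer) `β ∈ (1,2)`, the set `R_β(x)` of
binary sequences representing `x` has cardinality continuum for Lebesgue-a.e.
`x ∈ (0, 1/(β-1))`. -/
theorem generic_point_has_continuum_many_representations
    (β : ℝ) (hβ : β ∈ Set.Ioo (1 : ℝ) 2) :
    ∀ᵐ x : ℝ ∂volume, x ∈ Set.Ioo (0 : ℝ) (1 / (β - 1)) →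
      Cardinal.mk {ε : ℕ → ℕ // (∀ n, ε n ≤ 1) ∧ x = ∑' n : ℕ, (ε n : ℝ) / β ^ (n + 1)} =
        Cardinal.continuum := by
  obtain ⟨hβ1, hβ2⟩ := hβ
  have hnull := Sidorov.volume_NullBad hβ1 hβ2
  have hae : ∀ᵐ x : ℝ ∂volume, x ∉ Sidorov.NullBad β := measure_eq_zero_iff_ae_notMem.mp hnull
  filter_upwards [hae] with x hxnb hxIoo
  have hxM : x ∈ Set.Ico (0:ℝ) (Sidorov.MM β) :=
    ⟨le_of_lt hxIoo.1, by have := hxIoo.2; rwa [Sidorov.MM]⟩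
  have hnb : ∀ w, Sidorov.lval β x w ∉ Sidorov.Aset β := by
    intro w hw
    exact hxnb (Set.mem_iUnion.mpr ⟨w, hw⟩)
  apply le_antisymm
  · calc Cardinal.mk {ε : ℕ → ℕ // (∀ n, ε n ≤ 1) ∧ x = ∑' n : ℕ, (ε n : ℝ) / β ^ (n + 1)}
        ≤ Cardinal.mk (ℕ → ℕ) := Cardinal.mk_subtype_le _
      _ = Cardinal.continuum := by
          rw [← Cardinal.power_def, Cardinal.mk_nat, Cardinal.aleph0_power_aleph0]
  · have hcf : Cardinal.mk (ℕ → Bool) = Cardinal.continuum := by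
      rw [← Cardinal.power_def, Cardinal.mk_bool, Cardinal.mk_nat, Cardinal.two_power_aleph0]
    rw [← hcf]
    exact Cardinal.mk_le_of_injective (f := fun a : ℕ → Bool =>
      (⟨fun n => Sidorov.dig β x a n, fun n => Sidorov.dig_le_one β x a n,
        Sidorov.rep_tsum hβ1 hβ2 hxM a⟩ :
        {ε : ℕ → ℕ // (∀ n, ε n ≤ 1) ∧ x = ∑' n : ℕ, (ε n : ℝ) / β ^ (n + 1)}))
      (fun a a' h => Sidorov.inj_dig hβ1 hβ2 hxM hnb (by
        have := congrArg Subtype.val h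
        simpa using this))
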